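/- Let X be a compact metric space and F ∪ P a finite family of continuous self-maps on X with X = ⋃_{f∈F∪P} f(X). If F is a topologically contracting system on X and for every f ∈ F ∪ P and every p ∈ P the set f(p(X)) is a singleton, then P is also a topologically contracting system on X (and consequently (X, F ∪ P) is a topological fractal). -/

import Mathlib

open Set

/-- Composition of a list of self-maps. -/
def Comp {X : Type*} (l : List (X → X)) : X → X := l.foldr (· ∘ ·) id

/-- `F` is a topologically contracting system on `Y ⊆ X`. -/
def TopContracting {X : Type*} [TopologicalSpace X] (F : Set (X → X)) (Y : Set X) : Prop :=
  ∀ 𝒰 : Set (Set X), (∀ U ∈ 𝒰, IsOpen U) → Y ⊆ ⋃₀ 𝒰 →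
    ∃ n : ℕ, ∀ l : List (X → X), l.length = n → (∀ f ∈ l, f ∈ F) →
      ∃ U ∈ 𝒰, Comp l '' Y ⊆ U

/-- `(X, F)` is a topological fractal (whole-space version). -/
def TopFractal {X : Type*} [TopologicalSpace X] (F : Set (X → X)) : Prop :=
  F.Finite ∧ (∀ f ∈ F, Continuous f) ∧ (⋃ f ∈ F, Set.range f) = Set.univ ∧
    TopContracting F Set.univ

lemma Comp_cons {X : Type*} (f : X → X) (l : List (X → X)) :
    Comp (f :: l) = f ∘ Comp l := rfl

lemma Comp_append {X : Type*} (l₁ l₂ : List (X → X)) :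
    Comp (l₁ ++ l₂) = Comp l₁ ∘ Comp l₂ := by
  induction l₁ with
  | nil => rfl
  | cons f t ih =>
    simp only [List.cons_append, Comp_cons, ih]
    rfl

lemma Comp_image_take {X : Type*} (l : List (X → X)) (k : ℕ) :
    Comp l '' Set.univ ⊆ Comp (l.take k) '' Set.univ := by
  conv_lhs => rw [← List.take_append_drop k l]
  rw [Comp_append, Set.image_comp]
  exact Set.image_mono (Set.subset_univ _)

theorem stmt5 {X : Type*} [MetricSpace X] [CompactSpace X] (F P : Set (X → X))
    (hfin : (F ∪ P).Finite) (hcont : ∀ f ∈ F ∪ P, Continuous f)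
    (hcover : (⋃ f ∈ F ∪ P, Set.range f) = Set.univ)
    (hFc : TopContracting F Set.univ)
    (hsing : ∀ f ∈ F ∪ P, ∀ p ∈ P, ∃ x : X, f '' Set.range p = {x}) :
    TopContracting P Set.univ ∧ TopFractal (F ∪ P) := by
  have hPc : TopContracting P Set.univ := by
    intro 𝒰 hopen hcov
    refine ⟨2, ?_⟩
    intro l hlen hmem
    obtain ⟨p, q, rfl⟩ := List.length_eq_two.mp hlen
    have hp : p ∈ P := hmem p (by simp)
    have hq : q ∈ P := hmem q (by simp)
    obtain ⟨x, hx⟩ := hsing p (Or.inr hp) q hq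
    obtain ⟨U, hU𝒰, hxU⟩ := hcov (mem_univ x)
    refine ⟨U, hU𝒰, ?_⟩
    rintro y ⟨z, -, rfl⟩
    have hmem' : p (q z) ∈ p '' Set.range q := ⟨q z, ⟨z, rfl⟩, rfl⟩
    rw [hx, mem_singleton_iff] at hmem'
    show p (q z) ∈ U
    rw [hmem']
    exact hxU
  have hGc : TopContracting (F ∪ P) Set.univ := by
    intro 𝒰 hopen hcov
    have key : ∀ g : X → X, g ∈ F ∪ P → ∃ n, ∀ l : List (X → X), l.length = n →
        (∀ f ∈ l, f ∈ F) → ∃ U ∈ 𝒰, Comp l '' Set.univ ⊆ g ⁻¹' U := by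
      intro g hg
      have hcov' : Set.univ ⊆ ⋃₀ ((fun U => g ⁻¹' U) '' 𝒰) := by
        intro x _
        obtain ⟨U, hU, hgx⟩ := hcov (mem_univ (g x))
        exact ⟨g ⁻¹' U, ⟨U, hU, rfl⟩, hgx⟩
      have hopen' : ∀ V ∈ (fun U => g ⁻¹' U) '' 𝒰, IsOpen V := by
        rintro V ⟨U, hU, rfl⟩
        exact (hopen U hU).preimage (hcont g hg)
      obtain ⟨n, hn⟩ := hFc _ hopen' hcov'
      refine ⟨n, fun l hl hlF => ?_⟩
      obtain ⟨V, ⟨U, hU, rfl⟩, hV⟩ := hn l hl hlF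
      exact ⟨U, hU, hV⟩
    choose! nn hnn using key
    set N := hfin.toFinset.sup nn with hN
    refine ⟨N + 1, ?_⟩
    intro l hlen hmem
    obtain ⟨g, t, rfl⟩ : ∃ g t, l = g :: t := by
      cases l with
      | nil => simp at hlen
      | cons a b => exact ⟨a, b, rfl⟩
    have hg : g ∈ F ∪ P := hmem g List.mem_cons_self
    by_cases hPcase : ∃ f ∈ t, f ∈ P
    · obtain ⟨b, hbt, hbP⟩ := hPcase
      obtain ⟨t₁, t₂, rfl⟩ := List.append_of_mem hbt
      obtain ⟨s, a, hsa⟩ := ((g :: t₁).eq_nil_or_concat').resolve_left (by simp)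
      have hlist : g :: (t₁ ++ b :: t₂) = s ++ a :: b :: t₂ := by
        rw [← List.cons_append, hsa, List.append_assoc]
        rfl
      have ha : a ∈ F ∪ P := by
        have haux : a ∈ g :: (t₁ ++ b :: t₂) := by
          rw [hlist]; simp
        exact hmem a haux
      obtain ⟨x, hx⟩ := hsing a ha b hbP
      obtain ⟨U, hU, hxU⟩ := hcov (mem_univ (Comp s x))
      refine ⟨U, hU, ?_⟩
      rintro y ⟨z, -, rfl⟩
      have h1 : Comp (g :: (t₁ ++ b :: t₂)) z = Comp s (a (b (Comp t₂ z))) := by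
        rw [hlist, Comp_append, Comp_cons, Comp_cons]
        rfl
      have hab : a (b (Comp t₂ z)) = x := by
        have : a (b (Comp t₂ z)) ∈ a '' Set.range b := ⟨b (Comp t₂ z), ⟨Comp t₂ z, rfl⟩, rfl⟩
        rwa [hx, mem_singleton_iff] at this
      rw [h1, hab]
      exact hxU
    · have htF : ∀ f ∈ t, f ∈ F := fun f hf =>
        (hmem f (List.mem_cons_of_mem _ hf)).resolve_right (fun h => hPcase ⟨f, hf, h⟩)
      have hle : nn g ≤ N := Finset.le_sup (hfin.mem_toFinset.mpr hg)
      have htlen : t.length = N := by simpa using hlen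
      obtain ⟨U, hU, hsub⟩ := hnn g hg (t.take (nn g))
        (by rw [List.length_take]; omega)
        (fun f hf => htF f (List.mem_of_mem_take hf))
      refine ⟨U, hU, ?_⟩
      rintro y ⟨z, -, rfl⟩
      have hz : Comp t z ∈ Comp (t.take (nn g)) '' Set.univ :=
        Comp_image_take t (nn g) ⟨z, mem_univ z, rfl⟩
      exact hsub hz
  exact ⟨hPc, hfin, hcont, hcover, hGc⟩
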